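/- arXiv:2401.08850 — 8 statements merged into one kernel-verified Lean document; each statement's English description precedes it below -/
import Mathlib

section
/- For natural numbers n_1, ..., n_N with each n_i ≥ 2 and N ≥ 1, (1/N) Σ_{i=1}^N (n_i - 1)/(n_i + 1) ≤ (∏_{i=1}^N n_i - 1)/(∏_{i=1}^N n_i + 1). -/
open Finset

theorem mean_frac_le_prod_frac (N : ℕ) (hN : 1 ≤ N) (n : Fin N → ℕ)
    (hn : ∀ i, 2 ≤ n i) :
    (1 / (N : ℝ)) * ∑ i, ((n i : ℝ) - 1) / ((n i : ℝ) + 1)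
      ≤ ((∏ i, (n i : ℝ)) - 1) / ((∏ i, (n i : ℝ)) + 1) := by
  set P : ℝ := ∏ i, (n i : ℝ) with hPdef
  have hn1 : ∀ i, (1 : ℝ) ≤ (n i : ℝ) := by
    intro i
    exact_mod_cast le_trans (by norm_num) (hn i)
  have hPeq : P = ((∏ i, n i : ℕ) : ℝ) := by push_cast [hPdef]; rfl
  have hPle : ∀ i, (n i : ℝ) ≤ P := by
    intro i
    rw [hPeq]
    exact_mod_cast Finset.single_le_prod' (fun j _ => Nat.one_le_iff_ne_zero.mpr (by have := hn j; omega)) (mem_univ i)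
  have hPpos : (0 : ℝ) < P + 1 := by
    have : (1 : ℝ) ≤ P := by
      rw [hPeq]
      exact_mod_cast Finset.one_le_prod' (fun j _ => Nat.one_le_iff_ne_zero.mpr (by have := hn j; omega))
    linarith
  have hterm : ∀ i, ((n i : ℝ) - 1) / ((n i : ℝ) + 1) ≤ (P - 1) / (P + 1) := by
    intro i
    rw [div_le_div_iff₀ (by have := hn1 i; linarith) hPpos]
    have := hPle i
    nlinarith
  have hsum : ∑ i, ((n i : ℝ) - 1) / ((n i : ℝ) + 1) ≤ N * ((P - 1) / (P + 1)) := by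
    calc ∑ i, ((n i : ℝ) - 1) / ((n i : ℝ) + 1)
        ≤ ∑ _i : Fin N, (P - 1) / (P + 1) := Finset.sum_le_sum (fun i _ => hterm i)
      _ = N * ((P - 1) / (P + 1)) := by simp [mul_comm]
  have hNpos : (0 : ℝ) < N := by exact_mod_cast hN
  calc (1 / (N : ℝ)) * ∑ i, ((n i : ℝ) - 1) / ((n i : ℝ) + 1)
      ≤ (1 / (N : ℝ)) * (N * ((P - 1) / (P + 1))) := by
        apply mul_le_mul_of_nonneg_left hsum (by positivity)
    _ = (P - 1) / (P + 1) := by field_simp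
end

section
/- For natural numbers n_1, ..., n_N with each n_i ≥ 2 and N ≥ 1, (∏_{i=1}^N n_i) / ((1 + ∏_{i=1}^N n_i)²(2 + ∏_{i=1}^N n_i)) ≤ (1/N²) Σ_{i=1}^N n_i / ((n_i + 1)²(n_i + 2)). -/
open Finset

noncomputable def gfun (x : ℝ) : ℝ := x / ((x + 1) ^ 2 * (x + 2))

lemma gfun_pos {x : ℝ} (hx : 0 < x) : 0 < gfun x := by
  unfold gfun; positivity

lemma poly_key {m P : ℝ} (hm : 2 ≤ m) (hP : 2 ≤ P) :
    m * (P + 1) ^ 2 * (P + 2) + P * (m + 1) ^ 2 * (m + 2)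
      ≤ (m * P + 1) ^ 2 * (m * P + 2) := by
  nlinarith [mul_nonneg (sub_nonneg.2 hm) (sub_nonneg.2 hP), sq_nonneg (m - P),
    sq_nonneg (m*P - m - P), mul_nonneg (mul_nonneg (sub_nonneg.2 hm) (sub_nonneg.2 hP)) (mul_nonneg (sub_nonneg.2 hm) (sub_nonneg.2 hP)),
    mul_pos (lt_of_lt_of_le two_pos hm) (lt_of_lt_of_le two_pos hP)]

lemma key_prod {m P : ℝ} (hm : 2 ≤ m) (hP : 2 ≤ P) :
    gfun (m * P) ^ 2 ≤ (gfun P - gfun (m * P)) * (gfun m - gfun (m * P)) := by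
  have hm0 : (0:ℝ) < m := lt_of_lt_of_le two_pos hm
  have hP0 : (0:ℝ) < P := lt_of_lt_of_le two_pos hP
  have hE : (0:ℝ) < (P + 1) ^ 2 * (P + 2) := by positivity
  have hF : (0:ℝ) < (m + 1) ^ 2 * (m + 2) := by positivity
  have hD : (0:ℝ) < (m * P + 1) ^ 2 * (m * P + 2) := by positivity
  have h := poly_key hm hP
  unfold gfun
  rw [div_sub_div _ _ (ne_of_gt hE) (ne_of_gt hD), div_sub_div _ _ (ne_of_gt hF) (ne_of_gt hD),
    div_pow, div_mul_div_comm, div_le_div_iff₀ (by positivity) (by positivity)]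
  nlinarith [mul_pos hE hF, mul_pos hD hD, mul_pos hm0 hP0,
    mul_nonneg (le_of_lt hD) (sub_nonneg.2 h),
    mul_nonneg (mul_nonneg (le_of_lt hD) (sub_nonneg.2 h)) (le_of_lt (mul_pos hm0 hP0))]

lemma glt {m P : ℝ} (hm : 2 ≤ m) (hP : 2 ≤ P) : gfun (m * P) < gfun P := by
  have hm0 : (0:ℝ) < m := lt_of_lt_of_le two_pos hm
  have hP0 : (0:ℝ) < P := lt_of_lt_of_le two_pos hP
  have hE : (0:ℝ) < (P + 1) ^ 2 * (P + 2) := by positivity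
  have hD : (0:ℝ) < (m * P + 1) ^ 2 * (m * P + 2) := by positivity
  unfold gfun
  have hF : (0:ℝ) < (m + 1) ^ 2 * (m + 2) := by positivity
  rw [div_lt_div_iff₀ hD hE]
  nlinarith [poly_key hm hP, mul_pos hP0 hF, mul_pos hP0 hP0]

lemma key {m P : ℝ} (hm : 2 ≤ m) (hP : 2 ≤ P) (k : ℝ) (hk : 0 ≤ k) :
    (k + 1) ^ 2 * gfun (m * P) ≤ k ^ 2 * gfun P + gfun m := by
  have hG : 0 < gfun (m * P) := gfun_pos (by nlinarith)
  have hu : 0 < gfun P - gfun (m * P) := sub_pos.2 (glt hm hP)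
  have hmain := key_prod hm hP
  nlinarith [sq_nonneg (k * (gfun P - gfun (m*P)) - gfun (m*P)), mul_pos hu hG,
    mul_nonneg hk (le_of_lt hu)]

lemma aux {ι : Type*} (s : Finset ι) (f : ι → ℝ) (hf : ∀ i ∈ s, 2 ≤ f i) :
    (s.card : ℝ) ^ 2 * gfun (∏ i ∈ s, f i) ≤ ∑ i ∈ s, gfun (f i) := by
  induction s using Finset.cons_induction with
  | empty => simp
  | cons a t ha ih =>
    have hfa : 2 ≤ f a := hf a (Finset.mem_cons_self a t)
    have hft : ∀ i ∈ t, 2 ≤ f i := fun i hi => hf i (Finset.mem_cons_of_mem hi)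
    rw [Finset.prod_cons, Finset.sum_cons, Finset.card_cons]
    rcases t.eq_empty_or_nonempty with rfl | hne
    · simp
    · have hcard : 1 ≤ t.card := Finset.Nonempty.card_pos hne
      have hP : 2 ≤ ∏ i ∈ t, f i := by
        calc (2:ℝ) = 2 ^ 1 := by norm_num
        _ ≤ 2 ^ t.card := by
            apply pow_le_pow_right₀ (by norm_num) hcard
        _ = ∏ _i ∈ t, (2:ℝ) := by rw [Finset.prod_const]
        _ ≤ ∏ i ∈ t, f i := Finset.prod_le_prod (fun i _ => by norm_num) hft
      have hkey := key hfa hP (t.card : ℝ) (by positivity)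
      have := ih hft
      push_cast
      linarith

theorem prod_var_frac_le_mean_var_frac (N : ℕ) (hN : 1 ≤ N) (n : Fin N → ℕ)
    (hn : ∀ i, 2 ≤ n i) :
    (∏ i, (n i : ℝ)) / ((1 + ∏ i, (n i : ℝ)) ^ 2 * (2 + ∏ i, (n i : ℝ)))
      ≤ (1 / (N : ℝ) ^ 2) * ∑ i, (n i : ℝ) / (((n i : ℝ) + 1) ^ 2 * ((n i : ℝ) + 2)) := by
  have h := aux Finset.univ (fun i => (n i : ℝ)) (fun i _ => by show (2:ℝ) ≤ (n i : ℝ); exact_mod_cast hn i)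
  simp only [Finset.card_univ, Fintype.card_fin] at h
  have hNpos : (0:ℝ) < (N : ℝ) ^ 2 := by positivity
  have hL : (∏ i, (n i : ℝ)) / ((1 + ∏ i, (n i : ℝ)) ^ 2 * (2 + ∏ i, (n i : ℝ)))
      = gfun (∏ i, (n i : ℝ)) := by unfold gfun; ring_nf
  have hR : ∑ i, (n i : ℝ) / (((n i : ℝ) + 1) ^ 2 * ((n i : ℝ) + 2))
      = ∑ i, gfun ((n i : ℝ)) := by unfold gfun; rfl
  rw [hL, hR, one_div, inv_mul_eq_div, le_div_iff₀ hNpos]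
  linarith
end

section
/- For g(x) = (1+x)²(1 + 2/x) and natural numbers n_1, ..., n_N each at least 2 with N ≥ 1, g(∏_{i=1}^N n_i) ≥ N · g((1/N) Σ_{i=1}^N n_i). -/
open Finset

lemma sum_le_prod_nat : ∀ (N : ℕ) (n : Fin N → ℕ), (∀ i, 2 ≤ n i) →
    (∑ i, n i) ≤ ∏ i, n i := by
  intro N
  induction N with
  | zero => simp
  | succ k ih =>
    intro n hn
    rw [Fin.sum_univ_succ, Fin.prod_univ_succ]
    have h1 := ih (fun i => n i.succ) (fun i => hn _)
    rcases Nat.eq_zero_or_pos k with hk | hk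
    · subst hk; simp
    · have hpow : (2:ℕ)^k ≤ ∏ i : Fin k, n i.succ := by
        have := Finset.pow_card_le_prod (Finset.univ : Finset (Fin k))
          (fun i => n i.succ) 2 (fun i _ => hn _)
        simpa using this
      have hP2 : 2 ≤ ∏ i : Fin k, n i.succ :=
        le_trans (by calc (2:ℕ) = 2^1 := by norm_num
                        _ ≤ 2^k := Nat.pow_le_pow_right (by norm_num) hk) hpow
      have h0 := hn 0
      nlinarith [h1, hP2, h0]

lemma g_mono (a b : ℝ) (ha : 2 ≤ a) (hab : a ≤ b) :
    (1+a)^2*(1+2/a) ≤ (1+b)^2*(1+2/b) := by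
  have ha0 : 0 < a := by linarith
  have hb0 : 0 < b := by linarith
  have e1 : (1+a)^2*(1+2/a) = ((1+a)^2*(a+2))/a := by field_simp
  have e2 : (1+b)^2*(1+2/b) = ((1+b)^2*(b+2))/b := by field_simp
  rw [e1, e2, div_le_div_iff₀ ha0 hb0]
  have h1 : 0 ≤ b - a := by linarith
  have h2 : (4:ℝ) ≤ a*b := by nlinarith
  nlinarith [mul_nonneg h1 (show (0:ℝ) ≤ a*b*(a+b)+4*(a*b)-2 by nlinarith)]

lemma key1 (N m : ℝ) (hN : 2 ≤ N) (hm : 2 ≤ m) :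
    N*((1+m)^2*(1+2/m)) ≤ (1+N*m)^2*(1+2/(N*m)) := by
  have hm0 : 0 < m := by linarith
  have hN0 : 0 < N := by linarith
  have hNm0 : 0 < N*m := mul_pos hN0 hm0
  have e1 : N*((1+m)^2*(1+2/m)) = (N*((1+m)^2*(m+2)))/m := by field_simp
  have e2 : (1+N*m)^2*(1+2/(N*m)) = ((1+N*m)^2*(N*m+2))/(N*m) := by field_simp
  rw [e1, e2, div_le_div_iff₀ hm0 hNm0]
  have inner : (0:ℝ) ≤ N^2*m^3 - 5*(N*m) - 2*N - 2 := by
    nlinarith [mul_nonneg (sub_nonneg.2 hN) (sub_nonneg.2 hm), sq_nonneg (N*m)]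
  nlinarith [mul_nonneg (mul_nonneg hm0.le (show (0:ℝ) ≤ N - 1 by linarith)) inner]

theorem g_prod_ge_N_mul_g_mean (N : ℕ) (hN : 1 ≤ N) (n : Fin N → ℕ)
    (hn : ∀ i, 2 ≤ n i) :
    (N : ℝ) * ((1 + (1 / (N : ℝ)) * ∑ i, (n i : ℝ)) ^ 2
        * (1 + 2 / ((1 / (N : ℝ)) * ∑ i, (n i : ℝ))))
      ≤ (1 + ∏ i, (n i : ℝ)) ^ 2 * (1 + 2 / (∏ i, (n i : ℝ))) := by
  have hN0 : (0:ℝ) < N := by exact_mod_cast Nat.lt_of_lt_of_le Nat.zero_lt_one hN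
  set S : ℝ := ∑ i, (n i : ℝ) with hS
  set P : ℝ := ∏ i, (n i : ℝ) with hP
  have hSn : 2 * (N:ℝ) ≤ S := by
    rw [hS]
    calc 2 * (N:ℝ) = ∑ _i : Fin N, (2:ℝ) := by
          simp [Finset.sum_const, mul_comm]
      _ ≤ ∑ i, (n i : ℝ) := by
          apply Finset.sum_le_sum
          intro i _
          exact_mod_cast hn i
  have hSP : S ≤ P := by
    rw [hS, hP]
    have := sum_le_prod_nat N n hn
    push_cast
    exact_mod_cast this
  have hN1 : (1:ℝ) ≤ N := by exact_mod_cast hN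
  have hS2 : (2:ℝ) ≤ S := by linarith
  have hP2 : (2:ℝ) ≤ P := le_trans hS2 hSP
  set m : ℝ := 1/(N:ℝ) * S with hm
  have hm2 : (2:ℝ) ≤ m := by
    rw [hm, one_div, inv_mul_eq_div, le_div_iff₀ hN0]
    linarith
  have hSm : S = (N:ℝ) * m := by
    rw [hm]; field_simp
  rcases Nat.lt_or_ge N 2 with h | h
  · have h1 : (N:ℝ) = 1 := by rw [show N = 1 from by omega]; norm_num
    have hmS : m = S := by rw [hm, h1]; norm_num
    rw [hmS, h1, one_mul]
    exact g_mono S P hS2 hSP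
  · have hNr : (2:ℝ) ≤ N := by exact_mod_cast h
    calc (N:ℝ) * ((1 + m)^2 * (1 + 2/m)) ≤ (1 + (N:ℝ)*m)^2 * (1 + 2/((N:ℝ)*m)) :=
          key1 _ _ hNr hm2
      _ = (1 + S)^2 * (1 + 2/S) := by rw [← hSm]
      _ ≤ (1 + P)^2 * (1 + 2/P) := g_mono S P hS2 hSP
end

section
/- For natural numbers n_1, ..., n_N with each n_i ≥ 2 and N ≥ 1, Σ_{i=1}^N (n_i - 1)/(n_i + 1) ≥ (∏_{i=1}^N n_i - 1)/(∏_{i=1}^N n_i + 1). -/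
open Finset

lemma key_frac (a Q : ℝ) (ha : 2 ≤ a) (hQ : 1 ≤ Q) :
    (a*Q - 1)/(a*Q + 1) ≤ (a - 1)/(a + 1) + (Q - 1)/(Q + 1) := by
  have h1 : (0:ℝ) < a + 1 := by linarith
  have h2 : (0:ℝ) < Q + 1 := by linarith
  have h3 : (0:ℝ) < a*Q + 1 := by nlinarith
  rw [div_add_div _ _ (ne_of_gt h1) (ne_of_gt h2), div_le_div_iff₀ h3 (by positivity)]
  nlinarith [mul_pos h1 h2, sq_nonneg (a-Q), sq_nonneg (a*Q-1), mul_nonneg (sub_nonneg.2 ha) (sub_nonneg.2 hQ)]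

lemma aux_frac : ∀ (N : ℕ) (n : Fin N → ℝ), (∀ i, 2 ≤ n i) →
    ((∏ i, n i) - 1)/((∏ i, n i) + 1) ≤ ∑ i, (n i - 1)/(n i + 1) := by
  intro N
  induction N with
  | zero => intro n hn; simp
  | succ N ih =>
    intro n hn
    rw [Fin.prod_univ_succ, Fin.sum_univ_succ]
    have hQ : 1 ≤ ∏ i : Fin N, n i.succ := by
      rw [show (1:ℝ) = ∏ _i : Fin N, (1:ℝ) by simp]
      exact Finset.prod_le_prod (fun i _ => zero_le_one) (fun i _ => by linarith [hn i.succ])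
    have h1 := key_frac (n 0) (∏ i : Fin N, n i.succ) (hn 0) hQ
    have h2 := ih (fun i => n i.succ) (fun i => hn i.succ)
    linarith

theorem sum_frac_ge_prod_frac (N : ℕ) (hN : 1 ≤ N) (n : Fin N → ℕ)
    (hn : ∀ i, 2 ≤ n i) :
    ((∏ i, (n i : ℝ)) - 1) / ((∏ i, (n i : ℝ)) + 1)
      ≤ ∑ i, ((n i : ℝ) - 1) / ((n i : ℝ) + 1) := by
  exact aux_frac N (fun i => (n i : ℝ)) (fun i => by show (2:ℝ) ≤ (n i : ℝ); exact_mod_cast hn i)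
end

section
/- DecQN bias reduction: with γ ∈ [0,1] and b > 0, for natural numbers n_1, ..., n_N ≥ 2, the quantity (γb/N) Σ_{i=1}^N (n_i-1)/(n_i+1) is at most γb(∏ n_i - 1)/(∏ n_i + 1). Equivalently, E[Z^dec] ≤ E[Z^dqn], where Z^dec and Z^dqn are the DecQN and DQN target differences under i.i.d. Uniform(-b,b) approximation noise. -/
open Finset

lemma frac_mono {x y : ℝ} (hx : 0 < x) (hxy : x ≤ y) :
    (x - 1) / (x + 1) ≤ (y - 1) / (y + 1) := by
  have hx1 : 0 < x + 1 := by linarith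
  have hy1 : 0 < y + 1 := by linarith
  rw [div_le_div_iff₀ hx1 hy1]
  nlinarith

/-- DecQN bias reduction: `E[Z^dec] ≤ E[Z^dqn]` where
`E[Z^dec] = (γ b / N) ∑ (nᵢ-1)/(nᵢ+1)` and `E[Z^dqn] = γ b (M-1)/(M+1)`, `M = ∏ nᵢ`. -/
theorem decqn_bias_reduction (γ b : ℝ) (hγ0 : 0 ≤ γ) (hγ1 : γ ≤ 1) (hb : 0 < b)
    (N : ℕ) (hN : 1 ≤ N) (n : Fin N → ℕ) (hn : ∀ i, 2 ≤ n i) :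
    γ * b / (N : ℝ) * ∑ i, ((n i : ℝ) - 1) / ((n i : ℝ) + 1)
      ≤ γ * b * (((∏ i, (n i : ℝ)) - 1) / ((∏ i, (n i : ℝ)) + 1)) := by
  set M : ℝ := ∏ i, (n i : ℝ) with hM
  have hNpos : (0 : ℝ) < N := by exact_mod_cast hN
  have key : ∀ i : Fin N, ((n i : ℝ) - 1) / ((n i : ℝ) + 1) ≤ (M - 1) / (M + 1) := by
    intro i
    apply frac_mono
    · have := hn i; positivity
    · rw [hM]
      have hnat : n i ≤ ∏ j, n j :=
        Finset.single_le_prod' (fun j _ => le_trans (by norm_num) (hn j)) (Finset.mem_univ i)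
      calc ((n i : ℝ)) ≤ ((∏ j, n j : ℕ) : ℝ) := by exact_mod_cast hnat
        _ = ∏ j, ((n j : ℝ)) := by push_cast; ring
  have hsum : ∑ i, ((n i : ℝ) - 1) / ((n i : ℝ) + 1) ≤ N * ((M - 1) / (M + 1)) := by
    calc ∑ i, ((n i : ℝ) - 1) / ((n i : ℝ) + 1)
        ≤ ∑ _i : Fin N, (M - 1) / (M + 1) := Finset.sum_le_sum fun i _ => key i
      _ = N * ((M - 1) / (M + 1)) := by simp [mul_comm]
  have hγb : 0 ≤ γ * b := mul_nonneg hγ0 hb.le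
  calc γ * b / (N : ℝ) * ∑ i, ((n i : ℝ) - 1) / ((n i : ℝ) + 1)
      ≤ γ * b / (N : ℝ) * (N * ((M - 1) / (M + 1))) := by
        apply mul_le_mul_of_nonneg_left hsum (by positivity)
    _ = γ * b * ((M - 1) / (M + 1)) := by field_simp
end

section
/- DecQN variance increase: with γ ∈ [0,1], b > 0, and natural numbers n_1, ..., n_N ≥ 2, γ² · 4b² M / ((M+1)²(M+2)) ≤ (γ²/N²) Σ_{i=1}^N 4b² n_i / ((n_i+1)²(n_i+2)), where M = ∏_{i=1}^N n_i. Equivalently, Var(Z^dqn) ≤ Var(Z^dec). -/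
open Finset

lemma key_poly (p x nn : ℝ) (hp : 2 ≤ p) (hx : 2 ≤ x) (hnn : 1 ≤ nn)
    (h3 : 2 * nn ≤ p + 2) :
    nn * p * ((x+1)^2 * (x+2)) ≤ (p*x+1)^2 * (p*x+2) := by
  have h : (p+2)/2 * p * ((x+1)^2*(x+2)) ≤ (p*x+1)^2*(p*x+2) := by
    nlinarith [sq_nonneg (p-2), sq_nonneg (x-2), sq_nonneg (p*x-4), mul_nonneg (sub_nonneg.2 hp) (sub_nonneg.2 hx), sq_nonneg (p*x - x - 2), mul_nonneg (mul_nonneg (sub_nonneg.2 hp) (sub_nonneg.2 hx)) (sub_nonneg.2 hx), mul_nonneg (mul_nonneg (sub_nonneg.2 hp) (sub_nonneg.2 hp)) (sub_nonneg.2 hx)]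
  have h2 : nn * p * ((x+1)^2*(x+2)) ≤ (p+2)/2 * p * ((x+1)^2*(x+2)) := by
    have : (0:ℝ) ≤ p * ((x+1)^2*(x+2)) := by positivity
    nlinarith
  linarith

lemma two_mul_le_pow (N : ℕ) : 2 * N ≤ 2 ^ (N - 1) + 2 := by
  induction N with
  | zero => simp
  | succ k ih =>
    rcases Nat.eq_zero_or_pos k with h | h
    · subst h; simp
    have e : 2 ^ (k-1) * 2 = 2 ^ k := by
      rw [← pow_succ]; congr 1; omega
    have h1 : k - 1 < 2 ^ (k-1) := Nat.lt_two_pow_self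
    simp only [Nat.add_sub_cancel]
    omega

/-- DecQN variance increase: `Var(Z^dqn) ≤ Var(Z^dec)`. -/
theorem decqn_variance_increase (γ b : ℝ) (hγ0 : 0 ≤ γ) (hγ1 : γ ≤ 1) (hb : 0 < b)
    (N : ℕ) (hN : 1 ≤ N) (n : Fin N → ℕ) (hn : ∀ i, 2 ≤ n i) :
    γ ^ 2 * (4 * b ^ 2 * (∏ i, (n i : ℝ))
        / (((∏ i, (n i : ℝ)) + 1) ^ 2 * ((∏ i, (n i : ℝ)) + 2)))
      ≤ γ ^ 2 / (N : ℝ) ^ 2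
          * ∑ i, 4 * b ^ 2 * (n i : ℝ) / (((n i : ℝ) + 1) ^ 2 * ((n i : ℝ) + 2)) := by
  rcases eq_or_lt_of_le hN with h1 | h2
  · -- N = 1
    subst h1
    rw [Fin.prod_univ_one, Fin.sum_univ_one]
    norm_num
  · -- N ≥ 2
    have hN2 : 2 ≤ N := h2
    set M : ℝ := ∏ i, (n i : ℝ) with hM
    have hnpos : ∀ i, (2:ℝ) ≤ (n i : ℝ) := fun i => by exact_mod_cast hn i
    have hMd : (0:ℝ) < (M+1)^2 * (M+2) := by
      have : (0:ℝ) ≤ M := Finset.prod_nonneg fun i _ => by positivity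
      positivity
    -- key per-index bound
    have key : ∀ i, (N:ℝ) * (M / ((M+1)^2 * (M+2)))
        ≤ (n i : ℝ) / (((n i : ℝ)+1)^2 * ((n i : ℝ)+2)) := by
      intro i
      set p : ℝ := ∏ j ∈ univ.erase i, (n j : ℝ) with hp
      have hMeq : M = p * (n i : ℝ) := by
        rw [hM, hp, ← Finset.prod_erase_mul _ _ (Finset.mem_univ i)]
      have hcard : (univ.erase i).card = N - 1 := by
        rw [Finset.card_erase_of_mem (Finset.mem_univ i), Finset.card_univ, Fintype.card_fin]
      have hp2 : (2:ℝ)^(N-1) ≤ p := by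
        rw [hp]
        calc (2:ℝ)^(N-1) = ∏ _j ∈ univ.erase i, (2:ℝ) := by
              rw [Finset.prod_const, hcard]
          _ ≤ ∏ j ∈ univ.erase i, (n j : ℝ) :=
              Finset.prod_le_prod (fun _ _ => by norm_num) (fun j _ => hnpos j)
      have hpow2 : (2:ℝ) ≤ (2:ℝ)^(N-1) := by
        calc (2:ℝ) = 2^1 := by norm_num
          _ ≤ 2^(N-1) := pow_le_pow_right₀ (by norm_num) (by omega)
      have hpge : (2:ℝ) ≤ p := le_trans hpow2 hp2
      have h2N : 2 * (N:ℝ) ≤ p + 2 := by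
        have := two_mul_le_pow N
        have h' : (2:ℝ) * N ≤ 2^(N-1) + 2 := by exact_mod_cast this
        linarith
      have hx := hnpos i
      have hdx : (0:ℝ) < ((n i : ℝ)+1)^2 * ((n i : ℝ)+2) := by positivity
      rw [mul_div_assoc' , div_le_div_iff₀ hMd hdx]
      have hkp := key_poly p (n i : ℝ) (N:ℝ) hpge hx (by exact_mod_cast hN) h2N
      calc (N:ℝ) * M * (((n i:ℝ)+1)^2 * ((n i:ℝ)+2))
          = (n i:ℝ) * ((N:ℝ) * p * (((n i:ℝ)+1)^2 * ((n i:ℝ)+2))) := by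
            rw [hMeq]; ring_nf
        _ ≤ (n i:ℝ) * ((p*(n i:ℝ)+1)^2 * (p*(n i:ℝ)+2)) := by
            apply mul_le_mul_of_nonneg_left hkp (by linarith)
        _ = (n i:ℝ) * ((M+1)^2 * (M+2)) := by rw [hMeq]
    -- sum up
    have hb2 : (0:ℝ) < 4 * b^2 := by positivity
    have hsum : (N:ℝ)^2 * (4*b^2 * (M / ((M+1)^2*(M+2))))
        ≤ ∑ i, 4 * b ^ 2 * (n i : ℝ) / (((n i : ℝ)+1)^2 * ((n i : ℝ)+2)) := by
      calc (N:ℝ)^2 * (4*b^2 * (M / ((M+1)^2*(M+2))))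
          = ∑ _i : Fin N, 4*b^2 * ((N:ℝ) * (M / ((M+1)^2*(M+2)))) := by
            rw [Finset.sum_const, Finset.card_univ, Fintype.card_fin, nsmul_eq_mul]; ring
        _ ≤ ∑ i, 4 * b ^ 2 * (n i : ℝ) / (((n i : ℝ)+1)^2 * ((n i : ℝ)+2)) := by
            apply Finset.sum_le_sum
            intro i _
            rw [mul_div_assoc]
            exact mul_le_mul_of_nonneg_left (key i) (le_of_lt hb2)
    have hNpos : (0:ℝ) < (N:ℝ)^2 := by positivity
    have hγ2 : (0:ℝ) ≤ γ^2 := sq_nonneg γ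
    calc γ ^ 2 * (4 * b ^ 2 * M / ((M+1)^2 * (M+2)))
        = γ^2 / (N:ℝ)^2 * ((N:ℝ)^2 * (4*b^2 * (M / ((M+1)^2*(M+2))))) := by
          field_simp
      _ ≤ γ^2 / (N:ℝ)^2 * ∑ i, 4 * b ^ 2 * (n i : ℝ) / (((n i : ℝ)+1)^2 * ((n i : ℝ)+2)) := by
          apply mul_le_mul_of_nonneg_left hsum (by positivity)
end

section
/- Sum-decomposition bias increase: for natural numbers n_1, ..., n_N each at least 2, Σ_{i=1}^N (n_i-1)/(n_i+1) ≥ (M-1)/(M+1) where M = ∏_{i=1}^N n_i; hence the sum value-decomposition target difference satisfies E[Z^dqn] ≤ E[Z^sum] where E[Z^sum] = γb Σ (n_i-1)/(n_i+1) and E[Z^dqn] = γb(M-1)/(M+1), γ ∈ [0,1], b > 0. -/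
open Finset

lemma key_two (a m : ℝ) (ha : 1 ≤ a) (hm : 1 ≤ m) :
    (a * m - 1) / (a * m + 1) ≤ (a - 1) / (a + 1) + (m - 1) / (m + 1) := by
  have ha1 : (0:ℝ) < a + 1 := by linarith
  have hm1 : (0:ℝ) < m + 1 := by linarith
  have ham : (0:ℝ) < a * m + 1 := by nlinarith
  rw [div_add_div _ _ (ne_of_gt ha1) (ne_of_gt hm1), div_le_div_iff₀ ham (by positivity)]
  nlinarith [mul_nonneg (mul_nonneg (by nlinarith : (0:ℝ) ≤ a * m - 1) (by linarith : (0:ℝ) ≤ a - 1)) (by linarith : (0:ℝ) ≤ m - 1)]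

lemma key_sum {ι : Type*} (s : Finset ι) (f : ι → ℝ) (hf : ∀ i ∈ s, 1 ≤ f i) :
    ((∏ i ∈ s, f i) - 1) / ((∏ i ∈ s, f i) + 1) ≤ ∑ i ∈ s, (f i - 1) / (f i + 1) := by
  induction s using Finset.cons_induction with
  | empty => simp
  | cons a s ha ih =>
    rw [Finset.prod_cons, Finset.sum_cons]
    have h1 : 1 ≤ f a := hf a (Finset.mem_cons_self a s)
    have hrest : ∀ i ∈ s, 1 ≤ f i := fun i hi => hf i (Finset.mem_cons_of_mem hi)
    have hp : 1 ≤ ∏ i ∈ s, f i := by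
      refine Finset.prod_induction f (fun x => 1 ≤ x) (fun x y hx hy => ?_) le_rfl hrest
      nlinarith
    calc (f a * ∏ i ∈ s, f i - 1) / (f a * ∏ i ∈ s, f i + 1)
        ≤ (f a - 1) / (f a + 1) + ((∏ i ∈ s, f i) - 1) / ((∏ i ∈ s, f i) + 1) :=
          key_two _ _ h1 hp
      _ ≤ (f a - 1) / (f a + 1) + ∑ i ∈ s, (f i - 1) / (f i + 1) := by
          linarith [ih hrest]

/-- Sum-decomposition bias increase: `E[Z^dqn] ≤ E[Z^sum]`. -/
theorem sum_decomposition_bias_increase (γ b : ℝ) (hγ0 : 0 ≤ γ) (hγ1 : γ ≤ 1)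
    (hb : 0 < b) (N : ℕ) (hN : 1 ≤ N) (n : Fin N → ℕ) (hn : ∀ i, 2 ≤ n i) :
    γ * b * (((∏ i, (n i : ℝ)) - 1) / ((∏ i, (n i : ℝ)) + 1))
      ≤ γ * b * ∑ i, ((n i : ℝ) - 1) / ((n i : ℝ) + 1) := by
  apply mul_le_mul_of_nonneg_left _ (by positivity)
  exact key_sum Finset.univ _ (fun i _ => by exact_mod_cast Nat.one_le_of_lt (hn i))
end

section
/- Sum-decomposition variance increase: for natural numbers n_1, ..., n_N each at least 2 and reals γ ∈ [0,1], b > 0, γ² · 4b²M/((M+1)²(M+2)) ≤ γ² Σ_{i=1}^N 4b² n_i/((n_i+1)²(n_i+2)), where M = ∏_{i=1}^N n_i; i.e., Var(Z^dqn) ≤ Var(Z^sum). -/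
open Finset

lemma f_antitone (a m : ℝ) (ha : 1 ≤ a) (ham : a ≤ m) :
    m / ((m + 1) ^ 2 * (m + 2)) ≤ a / ((a + 1) ^ 2 * (a + 2)) := by
  have h1 : (0:ℝ) < (a + 1) ^ 2 * (a + 2) := by positivity
  have h2 : (0:ℝ) < (m + 1) ^ 2 * (m + 2) := by nlinarith
  rw [div_le_div_iff₀ h2 h1]
  have hk : 0 ≤ (m - a) * (a * m * (m + a) + 4 * a * m - 2) :=
    mul_nonneg (by linarith) (by nlinarith)
  nlinarith [hk]

/-- Sum-decomposition variance increase: `Var(Z^dqn) ≤ Var(Z^sum)`. -/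
theorem sum_decomposition_variance_increase (γ b : ℝ) (hγ0 : 0 ≤ γ) (hγ1 : γ ≤ 1)
    (hb : 0 < b) (N : ℕ) (hN : 1 ≤ N) (n : Fin N → ℕ) (hn : ∀ i, 2 ≤ n i) :
    γ ^ 2 * (4 * b ^ 2 * (∏ i, (n i : ℝ))
        / (((∏ i, (n i : ℝ)) + 1) ^ 2 * ((∏ i, (n i : ℝ)) + 2)))
      ≤ γ ^ 2 * ∑ i, 4 * b ^ 2 * (n i : ℝ) / (((n i : ℝ) + 1) ^ 2 * ((n i : ℝ) + 2)) := by
  have hN0 : 0 < N := hN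
  set i0 : Fin N := ⟨0, hN0⟩
  have h1 : ∀ i, (1:ℝ) ≤ (n i : ℝ) := fun i => by
    have := hn i; exact_mod_cast le_trans (by norm_num) this
  have hPn : n i0 ≤ ∏ i, n i :=
    Finset.single_le_prod' (fun i _ => le_trans (by norm_num) (hn i)) (mem_univ i0)
  have hP : (n i0 : ℝ) ≤ ∏ i, (n i : ℝ) := by
    rw [← Nat.cast_prod]; exact_mod_cast hPn
  have key : (∏ i, (n i : ℝ)) / (((∏ i, (n i : ℝ)) + 1) ^ 2 * ((∏ i, (n i : ℝ)) + 2))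
      ≤ (n i0 : ℝ) / (((n i0 : ℝ) + 1) ^ 2 * ((n i0 : ℝ) + 2)) :=
    f_antitone _ _ (h1 i0) hP
  have hsum : 4 * b ^ 2 * (n i0 : ℝ) / (((n i0 : ℝ) + 1) ^ 2 * ((n i0 : ℝ) + 2))
      ≤ ∑ i, 4 * b ^ 2 * (n i : ℝ) / (((n i : ℝ) + 1) ^ 2 * ((n i : ℝ) + 2)) := by
    apply Finset.single_le_sum (f := fun i => 4 * b ^ 2 * (n i : ℝ) / (((n i : ℝ) + 1) ^ 2 * ((n i : ℝ) + 2)))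
      (fun i _ => by positivity) (mem_univ i0)
  have h4b : (0:ℝ) ≤ 4 * b ^ 2 := by positivity
  have hmid : 4 * b ^ 2 * (∏ i, (n i : ℝ))
        / (((∏ i, (n i : ℝ)) + 1) ^ 2 * ((∏ i, (n i : ℝ)) + 2))
      ≤ 4 * b ^ 2 * (n i0 : ℝ) / (((n i0 : ℝ) + 1) ^ 2 * ((n i0 : ℝ) + 2)) := by
    rw [mul_div_assoc, mul_div_assoc]
    exact mul_le_mul_of_nonneg_left key h4b
  exact mul_le_mul_of_nonneg_left (hmid.trans hsum) (by positivity)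
end
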